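/- Let X ⊆ ℝ² be a closed disk (a closed ball of some radius ρ ≥ 0 centered at some point c ∈ ℝ²), so that V_X = {j − i : i, j ∈ X} is the closed ball of radius 2ρ centered at the origin. Let ℓ : [0,∞) → [0,∞), define D_X = {(‖v‖, ‖v′‖) : v, v′ ∈ ℝ², v′ − v ∈ V_X} and ℓ_X(r, r′) = inf { ℓ(‖v − v′‖) : ‖v‖ = r, ‖v′‖ = r′, v − v′ ∈ V_X }. Suppose f : ℝ² → [0,∞) satisfies f(v) ≤ e^{ℓ(‖v − v′‖)} · f(v′) for ALL v, v′ ∈ ℝ² with v − v′ ∈ V_X, and is integrable on circles. Define R(r) = (1/(2π)) ∫₀^{2π} f(r cos θ, r sin θ) dθ. Then R(r) ≤ e^{ℓ_X(r, r′)} · R(r′) for all (r, r′) ∈ D_X. -/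

import Mathlib

open MeasureTheory Real

open scoped RealInnerProductSpace

noncomputable def pt (r θ : ℝ) : EuclideanSpace ℝ (Fin 2) := !₂[r * Real.cos θ, r * Real.sin θ]

lemma pt_norm_sub (r r' θ φ : ℝ) :
    ‖pt r θ - pt r' (θ + φ)‖ ^ 2 = r^2 + r'^2 - 2 * (r * r' * Real.cos φ) := by
  have h := Real.cos_sub (θ + φ) θ
  simp only [add_sub_cancel_left] at h
  rw [EuclideanSpace.norm_eq, Real.sq_sqrt (by positivity)]
  simp only [Fin.sum_univ_two, PiLp.sub_apply, pt, PiLp.toLp_apply, Matrix.cons_val_zero, Matrix.cons_val_one,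
    Matrix.head_cons, Real.norm_eq_abs, sq_abs]
  rw [h]; nlinarith [Real.sin_sq_add_cos_sq θ, Real.sin_sq_add_cos_sq (θ + φ)]

lemma exists_phi (v v' : EuclideanSpace ℝ (Fin 2)) :
    ∃ φ ∈ Set.Icc (0:ℝ) π, ∀ θ, ‖pt ‖v‖ θ - pt ‖v'‖ (θ + φ)‖ = ‖v - v'‖ := by
  set t : ℝ := ⟪v, v'⟫ with ht
  refine ⟨Real.arccos (t / (‖v‖ * ‖v'‖)), ⟨Real.arccos_nonneg _, Real.arccos_le_pi _⟩, ?_⟩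
  have hcos : ‖v‖ * ‖v'‖ * Real.cos (Real.arccos (t / (‖v‖ * ‖v'‖))) = t := by
    by_cases h0 : ‖v‖ * ‖v'‖ = 0
    · have : t = 0 := by
        rcases mul_eq_zero.mp h0 with h | h
        · rw [ht, norm_eq_zero.mp h, inner_zero_left]
        · rw [ht, norm_eq_zero.mp h, inner_zero_right]
      rw [h0, this, zero_mul]
    · have hpos : 0 < ‖v‖ * ‖v'‖ :=
        lt_of_le_of_ne (mul_nonneg (norm_nonneg _) (norm_nonneg _)) (Ne.symm h0)
      have habs : |t| ≤ ‖v‖ * ‖v'‖ := abs_real_inner_le_norm v v'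
      rw [Real.cos_arccos (by rw [le_div_iff₀ hpos]; nlinarith [abs_le.mp habs])
        (by rw [div_le_one hpos]; exact (abs_le.mp habs).2)]
      field_simp
      exact mul_div_cancel_left₀ t h0
  intro θ
  have h1 : ‖pt ‖v‖ θ - pt ‖v'‖ (θ + Real.arccos (t / (‖v‖ * ‖v'‖)))‖ ^ 2 = ‖v - v'‖ ^ 2 := by
    rw [pt_norm_sub, hcos, norm_sub_sq_real]; ring
  have := congrArg Real.sqrt h1
  rwa [Real.sqrt_sq (norm_nonneg _), Real.sqrt_sq (norm_nonneg _)] at this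

lemma mem_VX_iff (c : EuclideanSpace ℝ (Fin 2)) (ρ : ℝ) (hρ : 0 ≤ ρ)
    (u : EuclideanSpace ℝ (Fin 2)) :
    (∃ i ∈ Metric.closedBall c ρ, ∃ j ∈ Metric.closedBall c ρ, u = j - i) ↔ ‖u‖ ≤ 2 * ρ := by
  constructor
  · rintro ⟨i, hi, j, hj, rfl⟩
    simp only [Metric.mem_closedBall, dist_eq_norm] at hi hj
    calc ‖j - i‖ = ‖(j - c) - (i - c)‖ := by rw [sub_sub_sub_cancel_right]
    _ ≤ ‖j - c‖ + ‖i - c‖ := norm_sub_le _ _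
    _ ≤ 2 * ρ := by linarith
  · intro h
    refine ⟨c - (1/2 : ℝ) • u, ?_, c + (1/2 : ℝ) • u, ?_, ?_⟩
    · simp only [Metric.mem_closedBall, dist_eq_norm, sub_sub_cancel_left, norm_neg, norm_smul]
      rw [Real.norm_eq_abs, abs_of_pos (by norm_num : (0:ℝ) < 1/2)]; linarith
    · simp only [Metric.mem_closedBall, dist_eq_norm, add_sub_cancel_left, norm_smul]
      rw [Real.norm_eq_abs, abs_of_pos (by norm_num : (0:ℝ) < 1/2)]; linarith
    · rw [add_sub_sub_cancel, ← two_smul ℝ, smul_smul]; norm_num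

set_option maxHeartbeats 1000000 in
/-- If `X` is a closed disk, `f` satisfies the `ℓ`-privacy constraint for
ALL pairs of vectors with difference in `V_X` and is integrable on circles, then its
circularization `R r = (1/(2π)) ∫₀^{2π} f (r cos θ, r sin θ) dθ` satisfies
`R r ≤ exp (ℓ_X (r, r')) * R r'` for all `(r, r') ∈ D_X`. -/
theorem circularization_inherits_strict_privacy
    (c : EuclideanSpace ℝ (Fin 2)) (ρ : ℝ) (hρ : 0 ≤ ρ)
    (X : Set (EuclideanSpace ℝ (Fin 2))) (hX : X = Metric.closedBall c ρ)
    (ℓ : ℝ → ℝ) (hℓ_nonneg : ∀ d : ℝ, 0 ≤ d → 0 ≤ ℓ d)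
    (f : EuclideanSpace ℝ (Fin 2) → ℝ) (hf_nonneg : ∀ v, 0 ≤ f v)
    (hf_priv : ∀ v v' : EuclideanSpace ℝ (Fin 2),
      v - v' ∈ {u : EuclideanSpace ℝ (Fin 2) | ∃ i ∈ X, ∃ j ∈ X, u = j - i} →
        f v ≤ Real.exp (ℓ ‖v - v'‖) * f v')
    (hf_circ_int : ∀ r : ℝ, 0 ≤ r →
      IntervalIntegrable
        (fun θ : ℝ => f (!₂[r * Real.cos θ, r * Real.sin θ] : EuclideanSpace ℝ (Fin 2)))
        volume 0 (2 * Real.pi))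
    (R : ℝ → ℝ)
    (hR : ∀ r : ℝ, R r = (1 / (2 * Real.pi)) *
      ∫ θ in (0 : ℝ)..(2 * Real.pi),
        f (!₂[r * Real.cos θ, r * Real.sin θ] : EuclideanSpace ℝ (Fin 2))) :
    ∀ r r' : ℝ,
      (r, r') ∈ {p : ℝ × ℝ | ∃ v v' : EuclideanSpace ℝ (Fin 2),
          p.1 = ‖v‖ ∧ p.2 = ‖v'‖ ∧
          v' - v ∈ {u : EuclideanSpace ℝ (Fin 2) | ∃ i ∈ X, ∃ j ∈ X, u = j - i}} →
        R r ≤ Real.exp (sInf {z : ℝ | ∃ v v' : EuclideanSpace ℝ (Fin 2),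
            ‖v‖ = r ∧ ‖v'‖ = r' ∧
            v - v' ∈ {u : EuclideanSpace ℝ (Fin 2) | ∃ i ∈ X, ∃ j ∈ X, u = j - i} ∧
            z = ℓ ‖v - v'‖}) * R r' := by
  intro r r' hmem
  simp only [Set.mem_setOf_eq] at hmem
  obtain ⟨v, v', hr, hr', hV⟩ := hmem
  have hrn : 0 ≤ r := hr ▸ norm_nonneg v
  have hr'n : 0 ≤ r' := hr' ▸ norm_nonneg v'
  set S : Set ℝ := {z : ℝ | ∃ v v' : EuclideanSpace ℝ (Fin 2),
      ‖v‖ = r ∧ ‖v'‖ = r' ∧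
      v - v' ∈ {u : EuclideanSpace ℝ (Fin 2) | ∃ i ∈ X, ∃ j ∈ X, u = j - i} ∧
      z = ℓ ‖v - v'‖} with hSdef
  have hVnorm : ‖v - v'‖ ≤ 2 * ρ := by
    rw [norm_sub_rev]
    rw [hX] at hV
    exact (mem_VX_iff c ρ hρ _).mp hV
  have hS_ne : S.Nonempty :=
    ⟨ℓ ‖v - v'‖, v, v', hr.symm, hr'.symm,
      by rw [hX]; exact (mem_VX_iff c ρ hρ _).mpr hVnorm, rfl⟩
  have hS_bdd : BddBelow S := by
    refine ⟨0, ?_⟩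
    rintro z ⟨w, w', -, -, -, rfl⟩
    exact hℓ_nonneg _ (norm_nonneg _)
  have hR'_nonneg : 0 ≤ R r' := by
    rw [hR]
    have := intervalIntegral.integral_nonneg (μ := volume) (a := (0:ℝ)) (b := 2*π) (by positivity)
      (fun θ _ => hf_nonneg (!₂[r' * Real.cos θ, r' * Real.sin θ] : EuclideanSpace ℝ (Fin 2)))
    positivity
  -- core estimate
  have key : ∀ z ∈ S, R r ≤ Real.exp z * R r' := by
    rintro z ⟨w, w', hw, hw', hwV, rfl⟩
    rw [hX] at hwV
    have hd : ‖w - w'‖ ≤ 2 * ρ := (mem_VX_iff c ρ hρ _).mp hwV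
    obtain ⟨φ, ⟨hφ0, hφπ⟩, hφ⟩ := exists_phi w w'
    rw [hw, hw'] at hφ
    set g : ℝ → ℝ := fun θ => f (pt r' θ) with hg
    have hpw : ∀ θ, f (pt r θ) ≤ Real.exp (ℓ ‖w - w'‖) * g (θ + φ) := by
      intro θ
      have hmemV : pt r θ - pt r' (θ + φ) ∈
          {u : EuclideanSpace ℝ (Fin 2) | ∃ i ∈ X, ∃ j ∈ X, u = j - i} := by
        rw [hX]
        exact (mem_VX_iff c ρ hρ _).mpr (by rw [hφ θ]; exact hd)
      have := hf_priv _ _ hmemV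
      rwa [hφ θ] at this
    have hg_int : IntervalIntegrable g volume 0 (2*π) := hf_circ_int r' hr'n
    have hg_per : Function.Periodic g (2*π) := by
      intro θ
      simp only [hg, pt, Real.cos_add_two_pi, Real.sin_add_two_pi]
    have h24 : IntervalIntegrable g volume (2*π) (2*π + 2*π) := by
      have h := hg_int.comp_add_right (-(2*π))
      have heq : (fun x => g (x + -(2*π))) = g := by
        funext x
        calc g (x + -(2*π)) = g ((x - 2*π)) := by rw [← sub_eq_add_neg]
        _ = g ((x - 2*π) + 2*π) := (hg_per _).symm
        _ = g x := by rw [sub_add_cancel]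
      rw [heq] at h
      have e1 : (0:ℝ) - -(2*π) = 2*π := by ring
      have e2 : (2*π : ℝ) - -(2*π) = 2*π + 2*π := by ring
      rwa [e1, e2] at h
    have h04 : IntervalIntegrable g volume 0 (2*π + 2*π) := hg_int.trans h24
    have hφint : IntervalIntegrable g volume φ (φ + 2*π) := by
      apply h04.mono_set
      rw [Set.uIcc_of_le (by nlinarith [Real.pi_pos]), Set.uIcc_of_le (by nlinarith [Real.pi_pos])]
      exact Set.Icc_subset_Icc hφ0 (by nlinarith [Real.pi_pos])
    have hshift : IntervalIntegrable (fun θ => g (θ + φ)) volume 0 (2*π) := by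
      have h := hφint.comp_add_right φ
      have e1 : φ - φ = (0:ℝ) := by ring
      have e2 : (φ + 2*π) - φ = 2*π := by ring
      rwa [e1, e2] at h
    have hineq : (∫ θ in (0:ℝ)..(2*π), f (pt r θ)) ≤
        ∫ θ in (0:ℝ)..(2*π), Real.exp (ℓ ‖w - w'‖) * g (θ + φ) := by
      apply intervalIntegral.integral_mono_on (by positivity) (hf_circ_int r hrn)
        (hshift.const_mul _)
      exact fun θ _ => hpw θ
    have hshift_eq : (∫ θ in (0:ℝ)..(2*π), g (θ + φ)) = ∫ θ in (0:ℝ)..(2*π), g θ := by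
      rw [intervalIntegral.integral_comp_add_right, zero_add, add_comm (2*π) φ,
        hg_per.intervalIntegral_add_eq φ 0, zero_add]
    have final : (∫ θ in (0:ℝ)..(2*π), f (pt r θ)) ≤
        Real.exp (ℓ ‖w - w'‖) * ∫ θ in (0:ℝ)..(2*π), g θ := by
      rw [← hshift_eq, ← intervalIntegral.integral_const_mul]
      exact hineq
    rw [hR r, hR r']
    have h2π : (0:ℝ) ≤ 1 / (2*π) := by positivity
    calc (1 / (2*π)) * ∫ θ in (0:ℝ)..(2*π),
          f (!₂[r * Real.cos θ, r * Real.sin θ] : EuclideanSpace ℝ (Fin 2))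
        ≤ (1 / (2*π)) * (Real.exp (ℓ ‖w - w'‖) * ∫ θ in (0:ℝ)..(2*π), g θ) :=
          mul_le_mul_of_nonneg_left final h2π
      _ = Real.exp (ℓ ‖w - w'‖) * ((1 / (2*π)) * ∫ θ in (0:ℝ)..(2*π),
          f (!₂[r' * Real.cos θ, r' * Real.sin θ] : EuclideanSpace ℝ (Fin 2))) := by
          rw [hg]; ring_nf; rfl
  -- epsilon argument
  have heps : ∀ ε > (0:ℝ), R r ≤ Real.exp (sInf S + ε) * R r' := by
    intro ε hε
    obtain ⟨z, hzS, hz⟩ := Real.lt_sInf_add_pos hS_ne hε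
    calc R r ≤ Real.exp z * R r' := key z hzS
    _ ≤ Real.exp (sInf S + ε) * R r' :=
      mul_le_mul_of_nonneg_right (Real.exp_le_exp.mpr hz.le) hR'_nonneg
  have htend : Filter.Tendsto (fun ε => Real.exp (sInf S + ε) * R r')
      (nhdsWithin 0 (Set.Ioi 0)) (nhds (Real.exp (sInf S) * R r')) := by
    have : Continuous (fun ε : ℝ => Real.exp (sInf S + ε) * R r') :=
      (Real.continuous_exp.comp (continuous_const.add continuous_id)).mul continuous_const
    have h0 := this.tendsto 0
    simp only [add_zero] at h0
    exact h0.mono_left nhdsWithin_le_nhds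
  exact ge_of_tendsto htend (eventually_nhdsWithin_of_forall fun ε hε => heps ε hε)
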